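/- Let A be a real symmetric d×d matrix with μI ⪯ A ⪯ LI for some 0 < μ ≤ L, let α ≥ 0, let θ_1,…,θ_K be nonnegative reals not all zero, and suppose 0 ≤ γ < 1/(L + α). Then the distortion matrix Q(A; α, γ, θ) := Σ_{k=1}^{K} θ_k (I − γ(A + αI))^{k−1} is symmetric positive definite, and the product Q(A; α, γ, θ) · A is symmetric positive definite (so the surrogate loss x ↦ (1/2)⟨x − c, Q(A; α, γ, θ) A (x − c)⟩ is a strongly convex quadratic). -/

import Mathlib

open Matrix Finset

/-- The distortion matrix `Q(A; α, γ, θ) = Σ_{k=1}^K θ_k (I - γ(A + αI))^(k-1)`. -/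
noncomputable def distortion {d : ℕ} (K : ℕ) (A : Matrix (Fin d) (Fin d) ℝ)
    (α γ : ℝ) (θ : ℕ → ℝ) : Matrix (Fin d) (Fin d) ℝ :=
  ∑ k ∈ Finset.Icc 1 K,
    θ k • ((1 : Matrix (Fin d) (Fin d) ℝ) - γ • (A + α • 1)) ^ (k - 1)

/-- Conjugation of a positive definite matrix by a unitary is positive definite. -/
lemma conj_posDef {d : ℕ} {u D : Matrix (Fin d) (Fin d) ℝ} (hu : u * star u = 1)
    (hD : D.PosDef) : (u * D * star u).PosDef := by
  have hDt : Dᵀ = D := by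
    have := hD.1
    rwa [Matrix.IsHermitian, Matrix.conjTranspose_eq_transpose_of_trivial] at this
  refine Matrix.PosDef.of_dotProduct_mulVec_pos ?_ ?_
  · simp [Matrix.IsHermitian, Matrix.star_eq_conjTranspose, conjTranspose_mul, hDt, mul_assoc]
  · intro x hx
    have hx' : star u *ᵥ x ≠ 0 := by
      intro h
      apply hx
      have := congrArg (u *ᵥ ·) h
      simpa [mulVec_mulVec, hu] using this
    have := hD.dotProduct_mulVec_pos hx'
    simpa only [star_mulVec, dotProduct_mulVec, vecMul_vecMul, star_eq_conjTranspose,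
      conjTranspose_conjTranspose, Matrix.mul_assoc] using this

lemma conj_pow' {d : ℕ} {u : Matrix (Fin d) (Fin d) ℝ} (hu : u * star u = 1)
    (hu' : star u * u = 1) (D : Matrix (Fin d) (Fin d) ℝ) (m : ℕ) :
    (u * D * star u) ^ m = u * D ^ m * star u := by
  induction m with
  | zero => simp [hu]
  | succ m ih =>
    rw [pow_succ, ih, pow_succ]
    simp only [Matrix.mul_assoc]
    rw [show star u * (u * (D * star u)) = D * star u by
      rw [← Matrix.mul_assoc, hu', Matrix.one_mul]]

/-- If `μI ⪯ A ⪯ LI` with `0 < μ ≤ L`, `α ≥ 0`, the weights `θ_1,…,θ_K`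
are nonnegative and not all zero, and `0 ≤ γ < 1/(L + α)`, then the distortion matrix
`Q(A; α, γ, θ)` is (symmetric) positive definite and so is `Q(A; α, γ, θ) * A`. -/
theorem stmt_3 (d K : ℕ) (A : Matrix (Fin d) (Fin d) ℝ) (hA : A.IsSymm)
    (μ L : ℝ) (hμ : 0 < μ) (hμL : μ ≤ L)
    (hAlow : (A - μ • (1 : Matrix (Fin d) (Fin d) ℝ)).PosSemidef)
    (hAup : (L • (1 : Matrix (Fin d) (Fin d) ℝ) - A).PosSemidef)
    (α γ : ℝ) (hα : 0 ≤ α) (hγ0 : 0 ≤ γ) (hγ : γ < 1 / (L + α))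
    (θ : ℕ → ℝ) (hθ : ∀ k, 0 ≤ θ k)
    (hθne : ∃ k ∈ Finset.Icc 1 K, θ k ≠ 0) :
    (distortion K A α γ θ).PosDef ∧ (distortion K A α γ θ * A).PosDef := by
  obtain ⟨k0, hk0mem, hk0⟩ := hθne
  have hH : A.IsHermitian := by
    rwa [Matrix.IsHermitian, Matrix.conjTranspose_eq_transpose_of_trivial]
  set u : Matrix (Fin d) (Fin d) ℝ := (hH.eigenvectorUnitary : Matrix (Fin d) (Fin d) ℝ)
    with hu_def
  have hu : u * star u = 1 := Matrix.mem_unitaryGroup_iff.mp hH.eigenvectorUnitary.2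
  have hu' : star u * u = 1 := Matrix.mem_unitaryGroup_iff'.mp hH.eigenvectorUnitary.2
  set ev : Fin d → ℝ := hH.eigenvalues with hev_def
  have hspec : A = u * diagonal ev * star u := by simpa [hu_def, hev_def] using hH.spectral_theorem
  -- eigenvalue bounds
  have hvv : ∀ i, star (⇑(hH.eigenvectorBasis i) : Fin d → ℝ) ⬝ᵥ ⇑(hH.eigenvectorBasis i) = 1 := by
    intro i
    have h1 : ‖hH.eigenvectorBasis i‖ = 1 := hH.eigenvectorBasis.orthonormal.1 i
    have h2 : (inner ℝ (hH.eigenvectorBasis i) (hH.eigenvectorBasis i) : ℝ) = 1 := by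
      rw [real_inner_self_eq_norm_sq, h1]; norm_num
    rwa [EuclideanSpace.inner_eq_star_dotProduct] at h2
  have hlow : ∀ i, μ ≤ ev i := by
    intro i
    set v : Fin d → ℝ := ⇑(hH.eigenvectorBasis i) with hv
    have h3 := hAlow.dotProduct_mulVec_nonneg v
    rw [sub_mulVec, dotProduct_sub, smul_mulVec, one_mulVec, dotProduct_smul,
      smul_eq_mul, hvv i, mul_one, sub_nonneg] at h3
    have h4 : ev i = star v ⬝ᵥ A *ᵥ v := by simpa [v] using hH.eigenvalues_eq i
    rw [h4]; exact h3
  have hup : ∀ i, ev i ≤ L := by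
    intro i
    set v : Fin d → ℝ := ⇑(hH.eigenvectorBasis i) with hv
    have h3 := hAup.dotProduct_mulVec_nonneg v
    rw [sub_mulVec, dotProduct_sub, smul_mulVec, one_mulVec, dotProduct_smul,
      smul_eq_mul, hvv i, mul_one, sub_nonneg] at h3
    have h4 : ev i = star v ⬝ᵥ A *ᵥ v := by simpa [v] using hH.eigenvalues_eq i
    rw [h4]; exact h3
  have hLα : 0 < L + α := by linarith
  have hγLα : γ * (L + α) < 1 := by
    have := (lt_div_iff₀ hLα).mp hγ
    linarith
  set g : Fin d → ℝ := fun i => 1 - γ * (ev i + α) with hg_def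
  have hg : ∀ i, 0 < g i := by
    intro i
    have h1 : ev i + α ≤ L + α := by linarith [hup i]
    have h2 : γ * (ev i + α) ≤ γ * (L + α) := mul_le_mul_of_nonneg_left h1 hγ0
    simp only [hg_def]
    linarith
  have hB : (1 : Matrix (Fin d) (Fin d) ℝ) - γ • (A + α • 1) = u * diagonal g * star u := by
    have hdg : diagonal g =
        (1 : Matrix (Fin d) (Fin d) ℝ) - γ • (diagonal ev + α • (1 : Matrix (Fin d) (Fin d) ℝ)) := by
      ext i j
      by_cases h : i = j <;>
        simp [Matrix.diagonal_apply, Matrix.one_apply, h, hg_def, mul_add]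
    rw [hdg]
    conv_lhs => rw [hspec]
    simp only [Matrix.mul_sub, Matrix.sub_mul, Matrix.mul_add, Matrix.add_mul,
      mul_smul_comm, smul_mul_assoc, Matrix.mul_one, Matrix.one_mul, hu]
  set q : Fin d → ℝ := fun i => ∑ k ∈ Finset.Icc 1 K, θ k * (g i) ^ (k - 1) with hq_def
  have hQ : distortion K A α γ θ = u * diagonal q * star u := by
    unfold distortion
    calc ∑ k ∈ Finset.Icc 1 K,
          θ k • ((1 : Matrix (Fin d) (Fin d) ℝ) - γ • (A + α • 1)) ^ (k - 1)
        = ∑ k ∈ Finset.Icc 1 K, u * (θ k • diagonal (g ^ (k - 1))) * star u := by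
          refine Finset.sum_congr rfl fun k _ => ?_
          rw [hB, conj_pow' hu hu' _ _, Matrix.diagonal_pow, mul_smul_comm, smul_mul_assoc]
      _ = u * (∑ k ∈ Finset.Icc 1 K, θ k • diagonal (g ^ (k - 1))) * star u := by
          rw [Finset.mul_sum, Finset.sum_mul]
      _ = u * diagonal q * star u := by
          congr 1
          congr 1
          ext i j
          by_cases h : i = j <;>
            simp [Matrix.sum_apply, Matrix.diagonal_apply, h, hq_def]
  have hq : ∀ i, 0 < q i := by
    intro i
    refine Finset.sum_pos' (fun k _ => mul_nonneg (hθ k) (pow_nonneg (hg i).le _)) ?_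
    exact ⟨k0, hk0mem, mul_pos (lt_of_le_of_ne (hθ k0) (Ne.symm hk0)) (pow_pos (hg i) _)⟩
  have hev_pos : ∀ i, 0 < ev i := fun i => lt_of_lt_of_le hμ (hlow i)
  have hQA : distortion K A α γ θ * A = u * diagonal (fun i => q i * ev i) * star u := by
    rw [hQ]
    conv_lhs => rw [hspec]
    simp only [Matrix.mul_assoc]
    rw [show star u * (u * (diagonal ev * star u)) = diagonal ev * star u by
      rw [← Matrix.mul_assoc, hu', Matrix.one_mul]]
    rw [← Matrix.mul_assoc (diagonal q), Matrix.diagonal_mul_diagonal]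
  constructor
  · rw [hQ]
    exact conj_posDef hu (Matrix.posDef_diagonal_iff.mpr hq)
  · rw [hQA]
    exact conj_posDef hu
      (Matrix.posDef_diagonal_iff.mpr fun i => mul_pos (hq i) (hev_pos i))
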